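/- For every real R ≥ 0, the integral over the Euclidean disc satisfies ∫_{B_{ℝ²}(0,R)} (1 − 2t₁²)/(1 + 2t₁²)² dt₁ dt₂ = π ( 1 − (1 + 2R²)^{−1/2} ). -/

import Mathlib

open MeasureTheory
open Set

lemma g_cont : Continuous (fun x:ℝ => (1-2*x^2)/(1+2*x^2)^2) := by
  apply Continuous.div (by continuity) (by continuity)
  intro x; positivity

lemma inner_ftc (s : ℝ) : ∫ x in (-s)..s, (1-2*x^2)/(1+2*x^2)^2 = 2*s/(1+2*s^2) := by
  have h : ∀ x : ℝ, HasDerivAt (fun x : ℝ => x/(1+2*x^2)) ((1-2*x^2)/(1+2*x^2)^2) x := by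
    intro x
    have hd : (1:ℝ)+2*x^2 ≠ 0 := by positivity
    have := (hasDerivAt_id x).div ((hasDerivAt_pow 2 x).const_mul 2 |>.const_add 1) hd
    refine this.congr_deriv ?_
    symm
    simp only [id_eq]
    field_simp
    ring
  rw [intervalIntegral.integral_eq_sub_of_hasDerivAt (fun x _ => h x)
    (g_cont.intervalIntegrable _ _)]
  field_simp
  ring

lemma outer_ftc (R : ℝ) (hR : 0 < R) :
    ∫ y in (-R)..R, 2*Real.sqrt (R^2-y^2)/(1+2*R^2-2*y^2)
      = Real.pi * (1 - (Real.sqrt (1+2*R^2))⁻¹) := by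
  set c := Real.sqrt (1+2*R^2) with hc
  have hcpos : 0 < c := Real.sqrt_pos.2 (by positivity)
  have hc2 : c^2 = 1+2*R^2 := Real.sq_sqrt (by positivity)
  set F : ℝ → ℝ := fun y => Real.arcsin (y/R) - (1/c) * Real.arcsin (y / (R * Real.sqrt (1+2*R^2-2*y^2))) with hF
  have hwpos : ∀ y ∈ Icc (-R) R, (0:ℝ) < 1+2*R^2-2*y^2 := by
    rintro y ⟨h1, h2⟩; nlinarith
  have hcont : ContinuousOn F (Icc (-R) R) := by
    apply ContinuousOn.sub
    · exact (Real.continuous_arcsin.comp (by fun_prop)).continuousOn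
    · apply ContinuousOn.mul continuousOn_const
      apply Real.continuous_arcsin.comp_continuousOn
      apply ContinuousOn.div continuousOn_id
      · exact (continuous_const.mul (Real.continuous_sqrt.comp (by fun_prop))).continuousOn
      · intro y hy
        have h := hwpos y hy
        have : Real.sqrt (1+2*R^2-2*y^2) > 0 := Real.sqrt_pos.2 h
        positivity
  have hderiv : ∀ y ∈ Ioo (-R) R, HasDerivAt F (2*Real.sqrt (R^2-y^2)/(1+2*R^2-2*y^2)) y := by
    rintro y ⟨h1, h2⟩
    have hupos : 0 < Real.sqrt (R^2-y^2) := Real.sqrt_pos.2 (by nlinarith)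
    have hwp : (0:ℝ) < 1+2*R^2-2*y^2 := by nlinarith
    have hqpos : 0 < Real.sqrt (1+2*R^2-2*y^2) := Real.sqrt_pos.2 hwp
    set u := Real.sqrt (R^2-y^2) with hu
    set q := Real.sqrt (1+2*R^2-2*y^2) with hq
    have hu2 : u^2 = R^2-y^2 := Real.sq_sqrt (by nlinarith)
    have hq2 : q^2 = 1+2*R^2-2*y^2 := Real.sq_sqrt hwp.le
    -- first arcsin
    have d1 : HasDerivAt (fun y : ℝ => Real.arcsin (y/R)) (1/u) y := by
      have e1 : Real.sqrt (1-(y/R)^2) = u/R := by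
        rw [show (1:ℝ)-(y/R)^2 = (u/R)^2 by rw [div_pow, div_pow, hu2]; field_simp]
        exact Real.sqrt_sq (by positivity)
      have hyR : y/R ∈ Ioo (-1:ℝ) 1 := by
        constructor
        · rw [lt_div_iff₀ hR]; nlinarith
        · rw [div_lt_iff₀ hR]; nlinarith
      have := (Real.hasDerivAt_arcsin (ne_of_gt hyR.1) (ne_of_lt hyR.2)).comp y
        ((hasDerivAt_id y).div_const R)
      refine this.congr_deriv ?_
      symm
      rw [e1]
      field_simp
    -- derivative of inner sqrt
    have dq : HasDerivAt (fun y : ℝ => Real.sqrt (1+2*R^2-2*y^2)) (-2*y/q) y := by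
      have h0 : HasDerivAt (fun y : ℝ => (1:ℝ)+2*R^2-2*y^2) (-(4*y)) y := by
        have := ((hasDerivAt_pow 2 y).const_mul 2).const_sub (1+2*R^2)
        refine this.congr_deriv ?_; symm; simp; ring
      have := (Real.hasDerivAt_sqrt (ne_of_gt hwp)).comp y h0
      refine this.congr_deriv ?_
      symm
      rw [← hq]
      field_simp
      ring
    have dφ : HasDerivAt (fun y : ℝ => y / (R * Real.sqrt (1+2*R^2-2*y^2))) (c^2/(R*q^3)) y := by
      have := (hasDerivAt_id y).div (dq.const_mul R) (by rw [← hq]; positivity)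
      rw [← hq] at this
      refine this.congr_deriv ?_
      symm
      have hq2' : (1:ℝ)+2*R^2 = q^2 + 2*y^2 := by rw [hq2]; ring
      rw [hc2, hq2']
      simp only [id_eq]
      field_simp
      ring
    have hφval : y / (R * q) ∈ Ioo (-1:ℝ) 1 := by
      have key : y^2 < (R*q)^2 := by rw [mul_pow, hq2]; nlinarith
      have hRq : 0 < R*q := by positivity
      constructor
      · rw [lt_div_iff₀ hRq]; nlinarith
      · rw [div_lt_iff₀ hRq]; nlinarith
    have e2 : Real.sqrt (1-(y/(R*q))^2) = c*u/(R*q) := by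
      rw [show (1:ℝ)-(y/(R*q))^2 = (c*u/(R*q))^2 by
        field_simp; linear_combination R^2 * hq2 - c^2 * hu2 - (R^2-y^2) * hc2]
      exact Real.sqrt_sq (by positivity)
    have d2 : HasDerivAt (fun y : ℝ => Real.arcsin (y / (R * Real.sqrt (1+2*R^2-2*y^2))))
        (c/((1+2*R^2-2*y^2)*u)) y := by
      have := (Real.hasDerivAt_arcsin (ne_of_gt hφval.1) (ne_of_lt hφval.2)).comp y dφ
      refine this.congr_deriv ?_
      symm
      rw [e2, ← hq2]
      field_simp
    have := d1.sub (d2.const_mul (1/c))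
    refine this.congr_deriv ?_
    symm
    have hcc : 1/c * (c/((1+2*R^2-2*y^2)*u)) = 1/((1+2*R^2-2*y^2)*u) := by
      field_simp
    rw [hcc]
    field_simp
    linear_combination 2*hu2
  have hint : IntervalIntegrable (fun y => 2*Real.sqrt (R^2-y^2)/(1+2*R^2-2*y^2)) volume (-R) R := by
    apply ContinuousOn.intervalIntegrable
    rw [Set.uIcc_of_le (by linarith)]
    apply ContinuousOn.div
    · exact (continuous_const.mul (Real.continuous_sqrt.comp (by fun_prop))).continuousOn
    · exact (by fun_prop : Continuous fun y:ℝ => 1+2*R^2-2*y^2).continuousOn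
    · intro y hy; exact (hwpos y hy).ne'
  rw [intervalIntegral.integral_eq_sub_of_hasDeriv_right_of_le (by linarith) hcont
    (fun y hy => (hderiv y hy).hasDerivWithinAt) hint]
  have hR0 : R ≠ 0 := hR.ne'
  have eR : F R = Real.pi/2 - (1/c)*(Real.pi/2) := by
    have h1 : (1:ℝ)+2*R^2-2*R^2 = 1 := by ring
    simp only [hF, h1, Real.sqrt_one, mul_one, div_self hR0, Real.arcsin_one]
  have eR' : F (-R) = -(Real.pi/2) + (1/c)*(Real.pi/2) := by
    have h1 : (1:ℝ)+2*R^2-2*(-R)^2 = 1 := by ring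
    simp only [hF, h1, Real.sqrt_one, mul_one, neg_div, div_self hR0, Real.arcsin_neg_one,
      Real.arcsin_neg, Real.arcsin_one]
    ring
  rw [eR, eR']
  rw [inv_eq_one_div]
  ring

lemma g_cont' : Continuous (fun x:ℝ => (1-2*x^2)/(1+2*x^2)^2) := by
  apply Continuous.div (by fun_prop) (by fun_prop)
  intro x; positivity

lemma g_abs (x : ℝ) : ‖(1-2*x^2)/(1+2*x^2)^2‖ ≤ 1 := by
  rw [Real.norm_eq_abs, abs_div, abs_of_pos (by positivity : (0:ℝ) < (1+2*x^2)^2),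
    div_le_one (by positivity)]
  rw [abs_le]
  constructor <;> nlinarith [sq_nonneg x, sq_nonneg (x^2)]

theorem stmt2 (R : ℝ) (hR : 0 ≤ R) :
    ∫ t in Metric.ball (0 : EuclideanSpace ℝ (Fin 2)) R,
        (1 - 2 * (t 0) ^ 2) / (1 + 2 * (t 0) ^ 2) ^ 2 =
      Real.pi * (1 - (1 + 2 * R ^ 2) ^ (-(1 : ℝ) / 2)) := by
  rcases eq_or_lt_of_le hR with h0 | hRpos
  · rw [← h0]
    simp [Real.one_rpow]
  set D : Set (ℝ × ℝ) := {p : ℝ × ℝ | p.1^2 + p.2^2 < R^2} with hD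
  have hDm : MeasurableSet D := (isOpen_lt (by fun_prop) continuous_const).measurableSet
  set g : ℝ → ℝ := fun x => (1-2*x^2)/(1+2*x^2)^2 with hg
  -- transfer to ℝ × ℝ
  let e : EuclideanSpace ℝ (Fin 2) ≃ᵐ ℝ × ℝ :=
    (MeasurableEquiv.toLp 2 (Fin 2 → ℝ)).symm.trans MeasurableEquiv.finTwoArrow
  have mp : MeasurePreserving e volume volume :=
    (volume_preserving_finTwoArrow ℝ).comp (EuclideanSpace.volume_preserving_symm_measurableEquiv_toLp (Fin 2))
  have hpre : e ⁻¹' D = Metric.ball 0 R := by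
    ext t
    simp only [Set.mem_preimage, hD, Set.mem_setOf_eq, mem_ball_zero_iff, EuclideanSpace.norm_eq,
      Fin.sum_univ_two, e, MeasurableEquiv.trans_apply]
    rw [show Real.sqrt (‖t 0‖^2 + ‖t 1‖^2) < R ↔ ‖t 0‖^2 + ‖t 1‖^2 < R^2 from Real.sqrt_lt' hRpos]
    simp [MeasurableEquiv.finTwoArrow, MeasurableEquiv.toLp_symm_apply, sq_abs]
  have key := mp.setIntegral_preimage_emb e.measurableEmbedding (fun p : ℝ × ℝ => g p.1) D
  rw [hpre] at key
  have lhs_eq : ∫ t in Metric.ball (0 : EuclideanSpace ℝ (Fin 2)) R,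
      (1 - 2 * (t 0) ^ 2) / (1 + 2 * (t 0) ^ 2) ^ 2 = ∫ p in D, g p.1 := by
    rw [← key]
    rfl
  rw [lhs_eq]
  -- integrability
  have hint : Integrable (D.indicator (fun p : ℝ × ℝ => g p.1)) volume := by
    rw [integrable_indicator_iff hDm]
    apply Measure.integrableOn_of_bounded (M := 1)
    · have hsub : D ⊆ Metric.ball (0 : ℝ × ℝ) R := by
        intro p hp
        simp only [hD, Set.mem_setOf_eq] at hp
        simp only [mem_ball_zero_iff, Prod.norm_def, max_lt_iff, Real.norm_eq_abs, abs_lt]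
        constructor <;> constructor <;> nlinarith [sq_nonneg p.1, sq_nonneg p.2]
      exact ((measure_mono hsub).trans_lt measure_ball_lt_top).ne
    · exact (g_cont'.comp continuous_fst).aestronglyMeasurable
    · filter_upwards with p
      exact g_abs p.1
  rw [← integral_indicator hDm, MeasureTheory.Measure.volume_eq_prod,
    integral_prod_symm _ (by rw [← MeasureTheory.Measure.volume_eq_prod]; exact hint)]
  -- inner integral
  have inner_eq : ∀ y : ℝ, (∫ x : ℝ, D.indicator (fun p : ℝ × ℝ => g p.1) (x, y))
      = (Ioo (-R) R).indicator (fun y => 2*Real.sqrt (R^2-y^2)/(1+2*R^2-2*y^2)) y := by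
    intro y
    by_cases hy : y ∈ Ioo (-R) R
    · obtain ⟨hy1, hy2⟩ := hy
      set s := Real.sqrt (R^2-y^2) with hs
      have hspos : 0 < s := Real.sqrt_pos.2 (by nlinarith)
      have hs2 : s^2 = R^2-y^2 := Real.sq_sqrt (by nlinarith)
      have hsec : (fun x : ℝ => D.indicator (fun p : ℝ × ℝ => g p.1) (x, y))
          = (Ioo (-s) s).indicator g := by
        funext x
        have hcond : ((x, y) ∈ D) ↔ x ∈ Ioo (-s) s := by
          simp only [hD, Set.mem_setOf_eq, Set.mem_Ioo]
          constructor
          · intro h; constructor <;> nlinarith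
          · rintro ⟨h1, h2⟩; nlinarith
        rw [Set.indicator_apply, Set.indicator_apply, if_congr hcond rfl rfl]
      rw [hsec, integral_indicator measurableSet_Ioo,
        ← MeasureTheory.integral_Ioc_eq_integral_Ioo,
        ← intervalIntegral.integral_of_le (by linarith)]
      rw [Set.indicator_of_mem (Set.mem_Ioo.2 ⟨hy1, hy2⟩)]
      rw [hg]
      rw [inner_ftc s]
      rw [show (1:ℝ)+2*s^2 = 1+2*R^2-2*y^2 by rw [hs2]; ring]
    · have hzero : ∀ x : ℝ, D.indicator (fun p : ℝ × ℝ => g p.1) (x, y) = 0 := by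
        intro x
        apply Set.indicator_of_notMem
        simp only [hD, Set.mem_setOf_eq, not_lt]
        simp only [Set.mem_Ioo, not_and_or, not_lt] at hy
        rcases hy with h | h <;> nlinarith [sq_nonneg x]
      simp only [hzero, integral_zero, Set.indicator_of_notMem hy]
  simp only [inner_eq]
  rw [integral_indicator measurableSet_Ioo, ← MeasureTheory.integral_Ioc_eq_integral_Ioo,
    ← intervalIntegral.integral_of_le (by linarith), outer_ftc R hRpos]
  congr 1
  rw [show (-(1:ℝ)/2) = -(1/2) by ring, Real.rpow_neg (by positivity), ← Real.sqrt_eq_rpow]
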